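/- Suppose u and v are λ-quasi-convex on a neighborhood of x ∈ ℝⁿ, and the sum w = u + v has an upper contact jet (p, A) at x. Then x is an upper contact point for both u and v; in particular u and v are both differentiable at x and p = Du(x) + Dv(x). -/

import Mathlib

open scoped RealInnerProductSpace
open Filter Topology

section helpers
variable {E : Type*} [NormedAddCommGroup E] [InnerProductSpace ℝ E] [FiniteDimensional ℝ E]

set_option linter.unusedSectionVars false

/-- Subgradient existence at an interior point of the domain of a convex function. -/
lemma exists_subgrad {U : Set E} {f : E → ℝ} {x : E} (hU : U ∈ 𝓝 x)
    (hf : ConvexOn ℝ U f) : ∃ q : E, ∀ y ∈ interior U, f x + ⟪q, y - x⟫ ≤ f y := by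
  have hxint : x ∈ interior U := mem_interior_iff_mem_nhds.2 hU
  have hfi : ConvexOn ℝ (interior U) f := hf.subset interior_subset hf.1.interior
  have hcont : ContinuousOn f (interior U) := hf.continuousOn_interior
  -- the strict epigraph over the interior
  set s : Set (E × ℝ) := {q : E × ℝ | q.1 ∈ interior U ∧ f q.1 < q.2} with hs
  have hsopen : IsOpen s := by
    have : s = (interior U ×ˢ (Set.univ : Set ℝ)) ∩
        (fun q : E × ℝ => f q.1 - q.2) ⁻¹' Set.Iio 0 := by
      ext q; simp [hs, sub_neg]
    rw [this]
    refine ContinuousOn.isOpen_inter_preimage ?_ (isOpen_interior.prod isOpen_univ) isOpen_Iio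
    exact (hcont.comp continuous_fst.continuousOn (fun q hq => hq.1)).sub
      continuous_snd.continuousOn
  have hsconv : Convex ℝ s := by
    intro a ha b hb t1 t2 ht1 ht2 hts
    refine ⟨hfi.1 ha.1 hb.1 ht1 ht2 hts, ?_⟩
    calc f (t1 • a.1 + t2 • b.1) ≤ t1 * f a.1 + t2 * f b.1 := hfi.2 ha.1 hb.1 ht1 ht2 hts
      _ < t1 * a.2 + t2 * b.2 := by
          rcases ht1.lt_or_eq with h1 | h1
          · rcases ht2.lt_or_eq with h2 | h2
            · exact add_lt_add (by nlinarith [ha.2]) (by nlinarith [hb.2])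
            · have : t1 = 1 := by linarith
              simp only [← h2, this]; nlinarith [ha.2]
          · have : t2 = 1 := by linarith
            simp only [← h1, this]; nlinarith [hb.2]
  have hxs : ((x, f x) : E × ℝ) ∉ s := fun h => lt_irrefl _ h.2
  obtain ⟨ℓ, hℓ⟩ := geometric_hahn_banach_open_point hsconv hsopen hxs
  set L : E →L[ℝ] ℝ := ℓ.comp (ContinuousLinearMap.inl ℝ E ℝ) with hL
  set b : ℝ := ℓ (0, 1) with hb
  have hsplit : ∀ y : E, ∀ t : ℝ, ℓ (y, t) = L y + t * b := by
    intro y t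
    have : (y, t) = (y, (0:ℝ)) + t • ((0:E), (1:ℝ)) := by simp [Prod.ext_iff]
    rw [this, map_add, map_smul]
    simp [hL, hb, smul_eq_mul]
  have key : ∀ y ∈ interior U, ∀ t : ℝ, f y < t → L y + t * b < L x + f x * b := by
    intro y hy t ht
    have := hℓ (y, t) ⟨hy, ht⟩
    rwa [hsplit, hsplit] at this
  have hbneg : b < 0 := by
    have := key x hxint (f x + 1) (by linarith)
    nlinarith
  have hb0 : b ≠ 0 := ne_of_lt hbneg
  have hkey2 : ∀ y ∈ interior U, L y + f y * b ≤ L x + f x * b := by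
    intro y hy
    by_contra hcon
    push_neg at hcon
    set δ := L y + f y * b - (L x + f x * b) with hδ
    have hδpos : 0 < δ := by linarith
    have hq : 0 < δ / (-2 * b) := div_pos hδpos (by linarith)
    have := key y hy (f y + δ / (-2 * b)) (by linarith)
    have hb' : δ / (-2 * b) * b = -(δ / 2) := by field_simp
    nlinarith [hb']
  refine ⟨(-b)⁻¹ • ((InnerProductSpace.toDual ℝ E).symm (L : E →L[ℝ] ℝ) : E), fun y hy => ?_⟩
  have h1 : ⟪(-b)⁻¹ • ((InnerProductSpace.toDual ℝ E).symm (L : E →L[ℝ] ℝ) : E), y - x⟫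
      = (-b)⁻¹ * L (y - x) := by
    rw [real_inner_smul_left, InnerProductSpace.toDual_symm_apply]
  rw [h1]
  have h2 := hkey2 y hy
  have h3 : L (y - x) = L y - L x := by rw [map_sub]
  rw [h3]
  have h4 : L y - L x ≤ (f y - f x) * (-b) := by nlinarith
  have h5 : (-b)⁻¹ * (L y - L x) ≤ (-b)⁻¹ * ((f y - f x) * (-b)) :=
    mul_le_mul_of_nonneg_left h4 (le_of_lt (inv_pos.2 (by linarith)))
  have h6 : (-b)⁻¹ * ((f y - f x) * (-b)) = f y - f x := by
    field_simp
  linarith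

/-- A two-sided quadratic squeeze gives differentiability with the given gradient. -/
lemma grad_of_squeeze {f : E → ℝ} {x q : E} {C : ℝ}
    (h : ∀ᶠ y in 𝓝 x, 0 ≤ f y - f x - ⟪q, y - x⟫ ∧
      f y - f x - ⟪q, y - x⟫ ≤ C * ‖y - x‖ ^ 2) :
    HasGradientAt f q x := by
  rw [hasGradientAt_iff_isLittleO, Asymptotics.isLittleO_iff]
  intro ε hε
  set C' := max C 1 with hC'
  have hC'pos : (0:ℝ) < C' := lt_of_lt_of_le one_pos (le_max_right _ _)
  have hball : Metric.ball x (ε / C') ∈ 𝓝 x := Metric.ball_mem_nhds x (by positivity)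
  filter_upwards [h, hball] with y hy hyb
  have hd : ‖y - x‖ < ε / C' := by rwa [Metric.mem_ball, dist_eq_norm] at hyb
  have hd2 : C' * ‖y - x‖ ≤ ε := by
    rw [lt_div_iff₀ hC'pos] at hd; nlinarith
  have h1 : ‖f y - f x - ⟪q, y - x⟫‖ ≤ C' * ‖y - x‖ ^ 2 := by
    rw [Real.norm_eq_abs, abs_of_nonneg hy.1]
    nlinarith [sq_nonneg ‖y - x‖, le_max_left C 1, hy.2]
  calc ‖f y - f x - ⟪q, y - x⟫‖ ≤ C' * ‖y - x‖ ^ 2 := h1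
    _ = (C' * ‖y - x‖) * ‖y - x‖ := by ring
    _ ≤ ε * ‖y - x‖ := by nlinarith [norm_nonneg (y - x)]

/-- If a linear lower bound sits below an upper contact jet, the slopes agree. -/
lemma jet_eq {x q P : E} {B : E →L[ℝ] E}
    (h : ∀ᶠ y in 𝓝 x, ⟪q, y - x⟫ ≤ ⟪P, y - x⟫ + (1/2) * ⟪B (y - x), y - x⟫) :
    q = P := by
  by_contra hne
  set d := q - P with hd
  have hdpos : 0 < ‖d‖ := by rwa [hd, norm_sub_pos_iff]
  obtain ⟨δ, hδpos, hδ⟩ := Metric.eventually_nhds_iff.1 h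
  set M : ℝ := |⟪B d, d⟫| + 1 with hM
  have hMpos : (0:ℝ) < M := by positivity
  set t : ℝ := min (δ / (2 * ‖d‖)) (‖d‖ ^ 2 / M) with ht
  have htpos : 0 < t := lt_min (by positivity) (by positivity)
  have hmem : dist (x + t • d) x < δ := by
    rw [dist_eq_norm, add_sub_cancel_left, norm_smul, Real.norm_eq_abs,
      abs_of_pos htpos]
    have h1 : t ≤ δ / (2 * ‖d‖) := min_le_left _ _
    rw [le_div_iff₀ (by positivity)] at h1
    nlinarith
  have hkey := hδ hmem
  rw [add_sub_cancel_left, real_inner_smul_right, real_inner_smul_right, map_smul,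
    real_inner_smul_left, real_inner_smul_right] at hkey
  -- hkey : t * ⟪q, d⟫ ≤ t * ⟪P, d⟫ + 1/2 * (t * (t * ⟪B d, d⟫))
  have hqP : ⟪q, d⟫ - ⟪P, d⟫ = ‖d‖ ^ 2 := by
    rw [← inner_sub_left, ← hd, real_inner_self_eq_norm_sq]
  have htM : t * M ≤ ‖d‖ ^ 2 := (le_div_iff₀ hMpos).1 (min_le_right _ _)
  have habs : ⟪B d, d⟫ ≤ M - 1 := by rw [hM]; nlinarith [le_abs_self (⟪B d, d⟫)]
  nlinarith [mul_le_mul_of_nonneg_left htM (le_of_lt htpos),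
    mul_le_mul_of_nonneg_left habs (sq_nonneg t), sq_nonneg t,
    mul_pos htpos (mul_pos hdpos hdpos), sq_nonneg ‖d‖]


end helpers

set_option maxHeartbeats 1000000 in
theorem stmt_12 {n : ℕ} {u v : EuclideanSpace ℝ (Fin n) → ℝ}
    {x : EuclideanSpace ℝ (Fin n)} {lam : ℝ} (hlam : 0 ≤ lam)
    {U : Set (EuclideanSpace ℝ (Fin n))} (hU : U ∈ 𝓝 x) (hUc : Convex ℝ U)
    (hu : ConvexOn ℝ U (fun y => u y + lam / 2 * ‖y‖ ^ 2))
    (hv : ConvexOn ℝ U (fun y => v y + lam / 2 * ‖y‖ ^ 2))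
    (p : EuclideanSpace ℝ (Fin n))
    (A : EuclideanSpace ℝ (Fin n) →L[ℝ] EuclideanSpace ℝ (Fin n))
    (hjet : ∀ᶠ y in 𝓝 x,
      u y + v y ≤ (u x + v x) + ⟪p, y - x⟫ + (1/2) * ⟪A (y - x), y - x⟫) :
    (∃ (pu : EuclideanSpace ℝ (Fin n))
        (Au : EuclideanSpace ℝ (Fin n) →L[ℝ] EuclideanSpace ℝ (Fin n)),
        ∀ᶠ y in 𝓝 x,
          u y ≤ u x + ⟪pu, y - x⟫ + (1/2) * ⟪Au (y - x), y - x⟫) ∧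
    (∃ (pv : EuclideanSpace ℝ (Fin n))
        (Av : EuclideanSpace ℝ (Fin n) →L[ℝ] EuclideanSpace ℝ (Fin n)),
        ∀ᶠ y in 𝓝 x,
          v y ≤ v x + ⟪pv, y - x⟫ + (1/2) * ⟪Av (y - x), y - x⟫) ∧
    (∃ (pu pv : EuclideanSpace ℝ (Fin n)),
        HasGradientAt u pu x ∧ HasGradientAt v pv x ∧ p = pu + pv) := by
  have hUnhds : interior U ∈ 𝓝 x := interior_mem_nhds.2 hU
  obtain ⟨qu, hqu⟩ := exists_subgrad hU hu
  obtain ⟨qv, hqv⟩ := exists_subgrad hU hv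
  have hnorm : ∀ y : EuclideanSpace ℝ (Fin n), ‖y‖ ^ 2 = ‖x‖ ^ 2 + 2 * ⟪x, y - x⟫ + ‖y - x‖ ^ 2 := by
    intro y
    have h := norm_add_sq_real x (y - x)
    rwa [add_sub_cancel] at h
  have hnorm' : ∀ y : EuclideanSpace ℝ (Fin n), lam / 2 * ‖y‖ ^ 2 =
      lam / 2 * ‖x‖ ^ 2 + lam * ⟪x, y - x⟫ + lam / 2 * ‖y - x‖ ^ 2 := by
    intro y; rw [hnorm y]; ring
  -- eventual upper jets for u and for v (with explicit quadratic error)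
  have hevu : ∀ᶠ y in 𝓝 x, u y ≤ u x + (⟪p, y - x⟫ - ⟪qv, y - x⟫ + lam * ⟪x, y - x⟫)
      + (1/2) * ⟪A (y - x), y - x⟫ + lam / 2 * ‖y - x‖ ^ 2 := by
    filter_upwards [hjet, hUnhds] with y hy hyU
    have h1 : v x + lam / 2 * ‖x‖ ^ 2 + ⟪qv, y - x⟫ ≤ v y + lam / 2 * ‖y‖ ^ 2 :=
      hqv y hyU
    have h2 := hnorm' y
    linarith
  have hevv : ∀ᶠ y in 𝓝 x, v y ≤ v x + (⟪p, y - x⟫ - ⟪qu, y - x⟫ + lam * ⟪x, y - x⟫)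
      + (1/2) * ⟪A (y - x), y - x⟫ + lam / 2 * ‖y - x‖ ^ 2 := by
    filter_upwards [hjet, hUnhds] with y hy hyU
    have h1 : u x + lam / 2 * ‖x‖ ^ 2 + ⟪qu, y - x⟫ ≤ u y + lam / 2 * ‖y‖ ^ 2 :=
      hqu y hyU
    have h2 := hnorm' y
    linarith
  -- the operator absorbing the quadratic error
  set B : EuclideanSpace ℝ (Fin n) →L[ℝ] EuclideanSpace ℝ (Fin n) := A + (2 * lam) • ContinuousLinearMap.id ℝ (EuclideanSpace ℝ (Fin n)) with hB
  have hBapp : ∀ h : EuclideanSpace ℝ (Fin n), (1/2) * ⟪B h, h⟫ = (1/2) * ⟪A h, h⟫ + lam * ‖h‖ ^ 2 := by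
    intro h
    have : B h = A h + (2 * lam) • h := rfl
    rw [this, inner_add_left, real_inner_smul_left, real_inner_self_eq_norm_sq]
    ring
  set Au : EuclideanSpace ℝ (Fin n) →L[ℝ] EuclideanSpace ℝ (Fin n) := A + lam • ContinuousLinearMap.id ℝ (EuclideanSpace ℝ (Fin n)) with hAu
  have hAuapp : ∀ h : EuclideanSpace ℝ (Fin n), (1/2) * ⟪Au h, h⟫ = (1/2) * ⟪A h, h⟫ + lam / 2 * ‖h‖ ^ 2 := by
    intro h
    have : Au h = A h + lam • h := rfl
    rw [this, inner_add_left, real_inner_smul_left, real_inner_self_eq_norm_sq]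
    ring
  -- first two conclusions
  have concl1 : ∀ᶠ y in 𝓝 x,
      u y ≤ u x + ⟪p - qv + lam • x, y - x⟫ + (1/2) * ⟪Au (y - x), y - x⟫ := by
    filter_upwards [hevu] with y hy
    rw [inner_add_left, inner_sub_left, real_inner_smul_left, hAuapp]
    linarith
  have concl2 : ∀ᶠ y in 𝓝 x,
      v y ≤ v x + ⟪p - qu + lam • x, y - x⟫ + (1/2) * ⟪Au (y - x), y - x⟫ := by
    filter_upwards [hevv] with y hy
    rw [inner_add_left, inner_sub_left, real_inner_smul_left, hAuapp]
    linarith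
  -- upper contact jets for the convexified functions
  have hjetphi : ∀ᶠ y in 𝓝 x, (u y + lam / 2 * ‖y‖ ^ 2) ≤ (u x + lam / 2 * ‖x‖ ^ 2)
      + ⟪p - qv + (2 * lam) • x, y - x⟫ + (1/2) * ⟪B (y - x), y - x⟫ := by
    filter_upwards [hevu] with y hy
    rw [inner_add_left, inner_sub_left, real_inner_smul_left, hBapp]
    have h2 := hnorm' y
    linarith
  have hjetpsi : ∀ᶠ y in 𝓝 x, (v y + lam / 2 * ‖y‖ ^ 2) ≤ (v x + lam / 2 * ‖x‖ ^ 2)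
      + ⟪p - qu + (2 * lam) • x, y - x⟫ + (1/2) * ⟪B (y - x), y - x⟫ := by
    filter_upwards [hevv] with y hy
    rw [inner_add_left, inner_sub_left, real_inner_smul_left, hBapp]
    have h2 := hnorm' y
    linarith
  -- the subgradients agree with the jet slopes
  have hqueq : qu = p - qv + (2 * lam) • x := by
    apply jet_eq (B := B)
    filter_upwards [hjetphi, hUnhds] with y hy hyU
    have h1 : u x + lam / 2 * ‖x‖ ^ 2 + ⟪qu, y - x⟫ ≤ u y + lam / 2 * ‖y‖ ^ 2 :=
      hqu y hyU
    linarith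
  have hqveq : qv = p - qu + (2 * lam) • x := by
    apply jet_eq (B := B)
    filter_upwards [hjetpsi, hUnhds] with y hy hyU
    have h1 : v x + lam / 2 * ‖x‖ ^ 2 + ⟪qv, y - x⟫ ≤ v y + lam / 2 * ‖y‖ ^ 2 :=
      hqv y hyU
    linarith
  -- gradients of the convexified functions
  have hgradphi : HasGradientAt (fun y : EuclideanSpace ℝ (Fin n) => u y + lam / 2 * ‖y‖ ^ 2) qu x := by
    apply grad_of_squeeze (C := ‖B‖)
    filter_upwards [hjetphi, hUnhds] with y hy hyU
    have h1 : u x + lam / 2 * ‖x‖ ^ 2 + ⟪qu, y - x⟫ ≤ u y + lam / 2 * ‖y‖ ^ 2 :=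
      hqu y hyU
    constructor
    · linarith
    · rw [← hqueq] at hy
      have h3 : ⟪B (y - x), y - x⟫ ≤ ‖B‖ * ‖y - x‖ ^ 2 := by
        calc ⟪B (y - x), y - x⟫ ≤ ‖B (y - x)‖ * ‖y - x‖ := real_inner_le_norm _ _
          _ ≤ (‖B‖ * ‖y - x‖) * ‖y - x‖ := by
              have := B.le_opNorm (y - x)
              nlinarith [norm_nonneg (y - x)]
          _ = ‖B‖ * ‖y - x‖ ^ 2 := by ring
      nlinarith [norm_nonneg B, sq_nonneg ‖y - x‖]
  have hgradpsi : HasGradientAt (fun y : EuclideanSpace ℝ (Fin n) => v y + lam / 2 * ‖y‖ ^ 2) qv x := by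
    apply grad_of_squeeze (C := ‖B‖)
    filter_upwards [hjetpsi, hUnhds] with y hy hyU
    have h1 : v x + lam / 2 * ‖x‖ ^ 2 + ⟪qv, y - x⟫ ≤ v y + lam / 2 * ‖y‖ ^ 2 :=
      hqv y hyU
    constructor
    · linarith
    · rw [← hqveq] at hy
      have h3 : ⟪B (y - x), y - x⟫ ≤ ‖B‖ * ‖y - x‖ ^ 2 := by
        calc ⟪B (y - x), y - x⟫ ≤ ‖B (y - x)‖ * ‖y - x‖ := real_inner_le_norm _ _
          _ ≤ (‖B‖ * ‖y - x‖) * ‖y - x‖ := by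
              have := B.le_opNorm (y - x)
              nlinarith [norm_nonneg (y - x)]
          _ = ‖B‖ * ‖y - x‖ ^ 2 := by ring
      nlinarith [norm_nonneg B, sq_nonneg ‖y - x‖]
  -- gradient of the quadratic
  have hgradsq : HasGradientAt (fun y : EuclideanSpace ℝ (Fin n) => lam / 2 * ‖y‖ ^ 2) (lam • x) x := by
    apply grad_of_squeeze (C := lam)
    filter_upwards with y
    rw [real_inner_smul_left]
    have h2 := hnorm' y
    constructor
    · nlinarith [sq_nonneg ‖y - x‖]
    · nlinarith [sq_nonneg ‖y - x‖]
  -- gradients of u and v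
  have hgradu : HasGradientAt u (qu - lam • x) x := by
    have h := hgradphi.sub hgradsq
    have heq : (fun y : EuclideanSpace ℝ (Fin n) => (u y + lam / 2 * ‖y‖ ^ 2) - lam / 2 * ‖y‖ ^ 2) = u := by
      funext y; ring
    change HasFDerivAt (fun y : EuclideanSpace ℝ (Fin n) => (u y + lam / 2 * ‖y‖ ^ 2) - lam / 2 * ‖y‖ ^ 2) _ x at h
    rw [heq] at h
    have hdual : (InnerProductSpace.toDual ℝ (EuclideanSpace ℝ (Fin n))) (qu - lam • x)
        = (InnerProductSpace.toDual ℝ (EuclideanSpace ℝ (Fin n))) qu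
          - (InnerProductSpace.toDual ℝ (EuclideanSpace ℝ (Fin n))) (lam • x) :=
      map_sub _ _ _
    show HasFDerivAt u ((InnerProductSpace.toDual ℝ (EuclideanSpace ℝ (Fin n))) (qu - lam • x)) x
    rw [hdual]
    exact h
  have hgradv : HasGradientAt v (qv - lam • x) x := by
    have h := hgradpsi.sub hgradsq
    have heq : (fun y : EuclideanSpace ℝ (Fin n) => (v y + lam / 2 * ‖y‖ ^ 2) - lam / 2 * ‖y‖ ^ 2) = v := by
      funext y; ring
    change HasFDerivAt (fun y : EuclideanSpace ℝ (Fin n) => (v y + lam / 2 * ‖y‖ ^ 2) - lam / 2 * ‖y‖ ^ 2) _ x at h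
    rw [heq] at h
    have hdual : (InnerProductSpace.toDual ℝ (EuclideanSpace ℝ (Fin n))) (qv - lam • x)
        = (InnerProductSpace.toDual ℝ (EuclideanSpace ℝ (Fin n))) qv
          - (InnerProductSpace.toDual ℝ (EuclideanSpace ℝ (Fin n))) (lam • x) :=
      map_sub _ _ _
    show HasFDerivAt v ((InnerProductSpace.toDual ℝ (EuclideanSpace ℝ (Fin n))) (qv - lam • x)) x
    rw [hdual]
    exact h
  refine ⟨⟨p - qv + lam • x, Au, concl1⟩, ⟨p - qu + lam • x, Au, concl2⟩,
    qu - lam • x, qv - lam • x, hgradu, hgradv, ?_⟩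
  rw [hqueq]
  module
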